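/- Player 2 needs memory in average-energy games with lower-bounded energy: consider the game G with player-1 states s₁, s₃ and player-2 state s₂, and edges s₁ → s₂ of weight 1, s₂ → s₂ of weight 0, s₂ → s₃ of weight −1, s₃ → s₃ of weight −1, and s₃ → s₂ of weight 2; let the objective be W = Lower(0) ∩ AvgEnergyLevel(1) from s₁. Then: (i) no memoryless strategy of player 2 is winning from s₁ (for every memoryless strategy of player 2 there is a consistent play from s₁ lying in W); and (ii) player 2 has a winning strategy from s₁ (a strategy such that every consistent play from s₁ lies outside W). -/

import Mathlib

open Filter

noncomputable section

/-- A two-player turn-based game on a (finite) state space `S`: `p1 s` holds iff state `s`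
belongs to player 1 (otherwise it belongs to player 2), `E` is the edge relation (every state
has a successor), and `w` assigns an integer weight to every edge. -/
structure Game (S : Type) where
  p1 : S → Prop
  E : S → S → Prop
  w : S → S → ℤ
  succ : ∀ s, ∃ t, E s t

variable {S : Type}

/-- `π` is a play of `G` starting from `s₀`. -/
def IsPlay (G : Game S) (s₀ : S) (π : ℕ → S) : Prop :=
  π 0 = s₀ ∧ ∀ n, G.E (π n) (π (n + 1))

/-- Energy level of the play `π` at position `n`. -/
def ELp (G : Game S) (π : ℕ → S) (n : ℕ) : ℤ :=
  ∑ i ∈ Finset.range n, G.w (π i) (π (i + 1))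

/-- Average-energy of a play (limsup variant), in the extended reals. -/
def AEsupP (G : Game S) (π : ℕ → S) : EReal :=
  limsup (fun n : ℕ => (((∑ i ∈ Finset.range n, (ELp G π (i + 1) : ℝ)) / n : ℝ) : EReal)) atTop

/-- Average-energy of a play (liminf variant). -/
def AEinfP (G : Game S) (π : ℕ → S) : EReal :=
  liminf (fun n : ℕ => (((∑ i ∈ Finset.range n, (ELp G π (i + 1) : ℝ)) / n : ℝ) : EReal)) atTop

/-- Mean-payoff of a play (limsup variant). -/
def MPsupP (G : Game S) (π : ℕ → S) : EReal :=
  limsup (fun n : ℕ => (((ELp G π n : ℝ) / n : ℝ) : EReal)) atTop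

/-- Total-payoff of a play (limsup variant). -/
def TPsupP (G : Game S) (π : ℕ → S) : EReal :=
  limsup (fun n : ℕ => ((ELp G π n : ℝ) : EReal)) atTop

/-- The history (finite prefix) `π 0, …, π n` of a play, as a list. -/
def hist (π : ℕ → S) (n : ℕ) : List S := List.ofFn (fun i : Fin (n + 1) => π i)

/-- A (deterministic) strategy for player 1: on every nonempty finite path of `G` ending in a
player-1 state, it prescribes an `E`-successor of the last state. -/
def IsStrat1 (G : Game S) (σ : List S → S) : Prop :=
  ∀ (ρ : List S) (h : ρ ≠ []), List.Chain' G.E ρ → G.p1 (ρ.getLast h) →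
    G.E (ρ.getLast h) (σ ρ)

/-- A strategy for player 2 (who owns the states where `p1` fails). -/
def IsStrat2 (G : Game S) (σ : List S → S) : Prop :=
  ∀ (ρ : List S) (h : ρ ≠ []), List.Chain' G.E ρ → ¬ G.p1 (ρ.getLast h) →
    G.E (ρ.getLast h) (σ ρ)

/-- A strategy is memoryless if its choice only depends on the last state of the history. -/
def Memoryless (σ : List S → S) : Prop :=
  ∀ (ρ ρ' : List S) (h : ρ ≠ []) (h' : ρ' ≠ []),
    ρ.getLast h = ρ'.getLast h' → σ ρ = σ ρ'

/-- The play `π` is consistent with the player-1 strategy `σ`. -/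
def Consistent1 (G : Game S) (σ : List S → S) (π : ℕ → S) : Prop :=
  ∀ n, G.p1 (π n) → π (n + 1) = σ (hist π n)

/-- The play `π` is consistent with the player-2 strategy `σ`. -/
def Consistent2 (G : Game S) (σ : List S → S) (π : ℕ → S) : Prop :=
  ∀ n, ¬ G.p1 (π n) → π (n + 1) = σ (hist π n)

/-- `σ` is a winning strategy for player 1 from `s₀` for the objective `Obj`:
every consistent play from `s₀` belongs to `Obj`. -/
def Winning1 (G : Game S) (s₀ : S) (σ : List S → S) (Obj : (ℕ → S) → Prop) : Prop :=
  IsStrat1 G σ ∧ ∀ π, IsPlay G s₀ π → Consistent1 G σ π → Obj π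

/-- `σ` is a winning strategy for player 2 from `s₀` against the objective `Obj`:
every consistent play from `s₀` lies outside `Obj`. -/
def Winning2 (G : Game S) (s₀ : S) (σ : List S → S) (Obj : (ℕ → S) → Prop) : Prop :=
  IsStrat2 G σ ∧ ∀ π, IsPlay G s₀ π → Consistent2 G σ π → ¬ Obj π

/-- Average-energy objective: the average-energy of the play is at most `t`. -/
def AvgEnergyLevel (G : Game S) (t : ℚ) : (ℕ → S) → Prop :=
  fun π => AEsupP G π ≤ ((t : ℝ) : EReal)

/-- Mean-payoff objective: the mean-payoff of the play is at most `t`. -/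
def MeanPayOff (G : Game S) (t : ℚ) : (ℕ → S) → Prop :=
  fun π => MPsupP G π ≤ ((t : ℝ) : EReal)

/-- Total-payoff objective: the total-payoff of the play is at most `t`. -/
def TotalPayOff (G : Game S) (t : ℤ) : (ℕ → S) → Prop :=
  fun π => TPsupP G π ≤ ((t : ℝ) : EReal)

/-- Lower-bounded energy objective with initial credit `c₀`. -/
def LowerObj (G : Game S) (c₀ : ℕ) : (ℕ → S) → Prop :=
  fun π => ∀ n, 0 ≤ (c₀ : ℤ) + ELp G π n

/-- Lower- and upper-bounded energy objective with upper bound `U` and initial credit `c₀`. -/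
def LUObj (G : Game S) (U c₀ : ℕ) : (ℕ → S) → Prop :=
  fun π => ∀ n, 0 ≤ (c₀ : ℤ) + ELp G π n ∧ (c₀ : ℤ) + ELp G π n ≤ (U : ℤ)

/-- The game of Lemma `ael_memory`: states `0 = s₁`, `1 = s₂`, `2 = s₃`, where `s₁, s₃`
belong to player 1 and `s₂` to player 2; edges `s₁ → s₂` (weight `1`), `s₂ → s₂` (weight `0`),
`s₂ → s₃` (weight `-1`), `s₃ → s₃` (weight `-1`), `s₃ → s₂` (weight `2`). -/
def memGame : Game (Fin 3) where
  p1 := fun s => s ≠ 1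
  E := fun x y =>
    (x = 0 ∧ y = 1) ∨ (x = 1 ∧ (y = 1 ∨ y = 2)) ∨ (x = 2 ∧ (y = 1 ∨ y = 2))
  w := fun x y =>
    if x = 0 then 1 else if x = 1 then (if y = 2 then -1 else 0)
    else (if y = 2 then -1 else 2)
  succ := by decide


lemma memGame_E (x y : Fin 3) : memGame.E x y ↔
    ((x = 0 ∧ y = 1) ∨ (x = 1 ∧ (y = 1 ∨ y = 2)) ∨ (x = 2 ∧ (y = 1 ∨ y = 2))) := Iff.rfl

lemma memGame_w (x y : Fin 3) : memGame.w x y =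
    if x = 0 then 1 else if x = 1 then (if y = 2 then -1 else 0)
    else (if y = 2 then -1 else 2) := rfl

lemma memGame_p1 (x : Fin 3) : memGame.p1 x ↔ x ≠ 1 := Iff.rfl

lemma hist_ne_nil (π : ℕ → S) (n : ℕ) : hist π n ≠ [] := by
  simp [hist]

lemma hist_getLast (π : ℕ → S) (n : ℕ) (h : hist π n ≠ []) :
    (hist π n).getLast h = π n := by
  simp only [hist] at h ⊢
  rw [List.getLast_eq_getElem, List.getElem_ofFn]
  simp

lemma mem_hist (π : ℕ → S) {i n : ℕ} (h : i ≤ n) : π i ∈ hist π n := by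
  rw [hist, List.mem_ofFn]
  exact ⟨⟨i, by omega⟩, rfl⟩

lemma ELp_succ (G : Game S) (π : ℕ → S) (n : ℕ) :
    ELp G π (n + 1) = ELp G π n + G.w (π n) (π (n + 1)) :=
  Finset.sum_range_succ _ _

lemma hist_one (π : ℕ → S) : hist π 1 = [π 0, π 1] := by
  simp [hist, List.ofFn_succ]

/-- Play for case A: `0,1,1,1,…` -/
def piA : ℕ → Fin 3 := fun n => if n = 0 then 0 else 1

/-- Play for case B: `0,1,2` then period `1,2,2`. -/
def piB : ℕ → Fin 3 := fun n =>
  if n = 0 then 0 else if n = 1 then 1 else if n % 3 = 0 then 1 else 2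

lemma ELp_piA (n : ℕ) : ELp memGame piA n = if n = 0 then 0 else 1 := by
  induction n with
  | zero => rfl
  | succ n ih =>
    rw [ELp_succ, ih]
    rcases Nat.eq_zero_or_pos n with h | h
    · subst h; simp [piA, memGame_w]
    · have h1 : n ≠ 0 := by omega
      simp [piA, h1, memGame_w]

lemma ELp_piB (n : ℕ) : ELp memGame piB n = if n = 0 then 0 else 2 - (n % 3 : ℤ) := by
  induction n with
  | zero => rfl
  | succ n ih =>
    rw [ELp_succ, ih]
    match n, (by omega : n = 0 ∨ n = 1 ∨ 2 ≤ n) with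
    | 0, _ => simp [piB, memGame_w]
    | 1, _ => simp [piB, memGame_w]
    | (n+2), _ =>
      have h0 : n + 2 ≠ 0 := by omega
      have h1 : n + 2 ≠ 1 := by omega
      have h0' : n + 3 ≠ 0 := by omega
      have h1' : n + 3 ≠ 1 := by omega
      rcases (by omega : (n+2) % 3 = 0 ∨ (n+2) % 3 = 1 ∨ (n+2) % 3 = 2) with h | h | h <;>
        have h' : (n+3) % 3 = ((n+2) % 3 + 1) % 3 := by omega
      all_goals
        simp [piB, h0, h1, h0', h1', h, h' , memGame_w]
      all_goals omega

lemma sum_piA (n : ℕ) : ∑ i ∈ Finset.range n, ELp memGame piA (i + 1) = (n : ℤ) := by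
  induction n with
  | zero => rfl
  | succ n ih => rw [Finset.sum_range_succ, ih, ELp_piA]; simp

lemma sum_piB (n : ℕ) :
    ∑ i ∈ Finset.range n, ELp memGame piB (i + 1)
      = (n : ℤ) - (if n % 3 = 2 then 1 else 0) := by
  induction n with
  | zero => rfl
  | succ n ih =>
    rw [Finset.sum_range_succ, ih, ELp_piB]
    have : (n+1) % 3 = (n % 3 + 1) % 3 := by omega
    rcases (by omega : n % 3 = 0 ∨ n % 3 = 1 ∨ n % 3 = 2) with h | h | h <;>
      simp [h, this] <;> omega

lemma limsup_coe_le {f : ℕ → ℝ} {c : ℝ} (h : ∀ n, f n ≤ c) :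
    limsup (fun n => ((f n : ℝ) : EReal)) atTop ≤ (c : EReal) :=
  limsup_le_of_le (by isBoundedDefault)
    (Eventually.of_forall fun n => EReal.coe_le_coe_iff.mpr (h n))

lemma le_limsup_coe {f : ℕ → ℝ} {c : ℝ} (h : ∀ᶠ n in atTop, c ≤ f n) :
    (c : EReal) ≤ limsup (fun n => ((f n : ℝ) : EReal)) atTop :=
  le_limsup_of_frequently_le
    (h.frequently.mono fun n hn => EReal.coe_le_coe_iff.mpr hn)
    (by isBoundedDefault)

lemma piB_edges (n : ℕ) : memGame.E (piB n) (piB (n + 1)) := by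
  match n, (by omega : n = 0 ∨ n = 1 ∨ 2 ≤ n) with
  | 0, _ => simp [piB, memGame_E]
  | 1, _ => simp [piB, memGame_E]
  | (n+2), _ =>
    have h0 : n + 2 ≠ 0 := by omega
    have h1 : n + 2 ≠ 1 := by omega
    rcases (by omega : (n+2) % 3 = 0 ∨ (n+2) % 3 = 1 ∨ (n+2) % 3 = 2) with h | h | h
    · have p : piB (n + 2) = 1 := by simp only [piB]; rw [if_neg h0, if_neg h1, if_pos h]
      have q : piB (n + 2 + 1) = 2 := by
        simp only [piB]
        rw [if_neg (by omega : n + 2 + 1 ≠ 0), if_neg (by omega : n + 2 + 1 ≠ 1),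
          if_neg (by omega : ¬ (n + 2 + 1) % 3 = 0)]
      rw [p, q, memGame_E]; decide
    · have p : piB (n + 2) = 2 := by
        simp only [piB]; rw [if_neg h0, if_neg h1, if_neg (by omega : ¬ (n + 2) % 3 = 0)]
      have q : piB (n + 2 + 1) = 2 := by
        simp only [piB]
        rw [if_neg (by omega : n + 2 + 1 ≠ 0), if_neg (by omega : n + 2 + 1 ≠ 1),
          if_neg (by omega : ¬ (n + 2 + 1) % 3 = 0)]
      rw [p, q, memGame_E]; decide
    · have p : piB (n + 2) = 2 := by
        simp only [piB]; rw [if_neg h0, if_neg h1, if_neg (by omega : ¬ (n + 2) % 3 = 0)]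
      have q : piB (n + 2 + 1) = 1 := by
        simp only [piB]
        rw [if_neg (by omega : n + 2 + 1 ≠ 0), if_neg (by omega : n + 2 + 1 ≠ 1),
          if_pos (by omega : (n + 2 + 1) % 3 = 0)]
      rw [p, q, memGame_E]; decide

/-- Player 2 needs memory in average-energy games with lower-bounded energy: in `memGame`,
with objective `Lower(0) ∩ AvgEnergyLevel(1)` from `s₁`, (i) no memoryless player-2 strategy
is winning (each admits a consistent play from `s₁` satisfying the objective), and
(ii) player 2 has a (memoryful) winning strategy from `s₁`. -/
theorem player2_needs_memory :
    (∀ σ : List (Fin 3) → Fin 3, IsStrat2 memGame σ → Memoryless σ →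
      ∃ π, IsPlay memGame 0 π ∧ Consistent2 memGame σ π ∧
        (LowerObj memGame 0 π ∧ AvgEnergyLevel memGame 1 π)) ∧
    (∃ σ : List (Fin 3) → Fin 3,
      Winning2 memGame 0 σ (fun π => LowerObj memGame 0 π ∧ AvgEnergyLevel memGame 1 π)) := by
  constructor
  · -- Part (i): no memoryless player-2 strategy wins
    intro σ hstrat hmem
    have hchain : List.Chain' memGame.E [(0 : Fin 3), 1] := by
      exact List.isChain_pair.mpr (Or.inl ⟨rfl, rfl⟩)
    have hE : memGame.E (([(0 : Fin 3), 1]).getLast (by simp)) (σ [0, 1]) :=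
      hstrat [0, 1] (by simp) hchain (by simp [memGame_p1])
    have hlast : (([(0 : Fin 3), 1]).getLast (by simp)) = 1 := rfl
    rw [hlast, memGame_E] at hE
    have hσ : σ [0, 1] = 1 ∨ σ [0, 1] = 2 := by
      rcases hE with ⟨h, _⟩ | ⟨_, h⟩ | ⟨h, _⟩
      · exact absurd h (by decide)
      · exact h
      · exact absurd h (by decide)
    -- common fact used to apply memorylessness
    have hmem' : ∀ (π : ℕ → Fin 3) (n : ℕ), π n = 1 → σ (hist π n) = σ [0, 1] := by
      intro π n hn
      exact hmem (hist π n) [0, 1] (hist_ne_nil π n) (by simp)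
        (by rw [hist_getLast, hn, hlast])
    rcases hσ with hσ1 | hσ2
    · -- strategy always stays in s₂ : play 0,1,1,1,…
      refine ⟨piA, ⟨rfl, ?_⟩, ?_, ?_, ?_⟩
      · intro n
        rcases Nat.eq_zero_or_pos n with h | h
        · subst h; simp [piA, memGame_E]
        · have h1 : n ≠ 0 := by omega
          simp [piA, h1, memGame_E]
      · intro n hn
        rw [memGame_p1, not_not] at hn
        have hn1 : piA n = 1 := hn
        have : piA (n + 1) = 1 := by simp [piA]
        rw [this, hmem' piA n hn1, hσ1]
      · intro n
        rw [ELp_piA]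
        split <;> omega
      · show AEsupP memGame piA ≤ _
        rw [AEsupP]
        apply limsup_coe_le
        intro n
        have key : (∑ i ∈ Finset.range n, (ELp memGame piA (i + 1) : ℝ)) = (n : ℝ) := by
          have h := sum_piA n
          have : ((∑ i ∈ Finset.range n, ELp memGame piA (i + 1) : ℤ) : ℝ) = ((n : ℤ) : ℝ) := by
            exact_mod_cast congrArg (fun z : ℤ => (z : ℝ)) h
          push_cast at this
          convert this using 2
        rw [key]
        have : ((1 : ℚ) : ℝ) = 1 := by norm_num
        rw [this]
        exact div_le_one_of_le₀ le_rfl (by positivity)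
    · -- strategy always moves to s₃ : play 0,1,2 then cycle 1,2,2
      refine ⟨piB, ⟨rfl, piB_edges⟩, ?_, ?_, ?_⟩
      · intro n hn
        rw [memGame_p1, not_not] at hn
        have hgoal : piB (n + 1) = 2 := by
          simp only [piB] at hn ⊢
          split_ifs at hn with h1 h2 h3
          · exact absurd hn (by decide)
          · subst h2; norm_num
          · have e0 : n + 1 ≠ 0 := by omega
            have e1 : n + 1 ≠ 1 := by omega
            have e3 : (n + 1) % 3 ≠ 0 := by omega
            simp [e0, e1, e3, h1]
          · exact absurd hn (by decide)
        rw [hgoal, hmem' piB n hn, hσ2]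
      · intro n
        rw [ELp_piB]
        have := Nat.mod_lt n (show 0 < 3 by omega)
        split <;> omega
      · show AEsupP memGame piB ≤ _
        rw [AEsupP]
        apply limsup_coe_le
        intro n
        have key : (∑ i ∈ Finset.range n, (ELp memGame piB (i + 1) : ℝ))
            = ((n : ℤ) - (if n % 3 = 2 then 1 else 0) : ℤ) := by
          have h := sum_piB n
          exact_mod_cast congrArg (fun z : ℤ => (z : ℝ)) h
        rw [key]
        have h1 : ((1 : ℚ) : ℝ) = 1 := by norm_num
        rw [h1]
        apply div_le_one_of_le₀ _ (by positivity)
        have : ((n : ℤ) - (if n % 3 = 2 then 1 else 0) : ℤ) ≤ (n : ℤ) := by split <;> omega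
        exact_mod_cast this
  · -- Part (ii): a memoryful winning strategy for player 2
    refine ⟨fun ρ => if (2 : Fin 3) ∈ ρ then 1 else 2, ?_, ?_⟩
    · intro ρ h hch hp
      rw [memGame_p1, not_not] at hp
      rw [hp, memGame_E]
      right; left
      refine ⟨rfl, ?_⟩
      by_cases hm : (2 : Fin 3) ∈ ρ <;> simp [hm]
    · rintro π ⟨h0, hedge⟩ hcons ⟨hL, hAE⟩
      have h1 : π 1 = 1 := by
        have h := hedge 0
        rw [h0, memGame_E] at h
        rcases h with ⟨_, h⟩ | ⟨h, _⟩ | ⟨h, _⟩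
        · exact h
        · exact absurd h (by decide)
        · exact absurd h (by decide)
      have h2 : π 2 = 2 := by
        have h := hcons 1 (by rw [memGame_p1, h1]; simp)
        rw [h]
        show (if (2 : Fin 3) ∈ hist π 1 then (1 : Fin 3) else 2) = 2
        rw [hist_one, h0, h1, if_neg (by decide)]
      have h3 : π 3 = 1 ∨ π 3 = 2 := by
        have h := hedge 2
        rw [h2, memGame_E] at h
        rcases h with ⟨h, _⟩ | ⟨h, _⟩ | ⟨_, h⟩
        · exact absurd h (by decide)
        · exact absurd h (by decide)
        · exact h
      rcases h3 with h3 | h3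
      · -- player 1 stays at s₂ forever; AE becomes 2 > 1
        have hall : ∀ n, 3 ≤ n → π n = 1 := by
          intro n hn
          induction n, hn using Nat.le_induction with
          | base => exact h3
          | succ n hn ih =>
            have h := hcons n (by rw [memGame_p1, ih]; simp)
            rw [h]
            show (if (2 : Fin 3) ∈ hist π n then (1 : Fin 3) else 2) = 1
            rw [if_pos (h2 ▸ mem_hist π (show 2 ≤ n by omega))]
        have hEL : ∀ n, 3 ≤ n → ELp memGame π n = 2 := by
          intro n hn
          induction n, hn using Nat.le_induction with
          | base =>
            show ELp memGame π (2 + 1) = 2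
            rw [ELp_succ, ELp_succ, ELp_succ]
            rw [h0, h1, h2, h3]
            simp [ELp, memGame_w]
          | succ n hn ih =>
            rw [ELp_succ, ih, hall n hn, hall (n+1) (by omega)]
            simp [memGame_w]
        have hsum : ∀ n, 2 ≤ n → ∑ i ∈ Finset.range n, ELp memGame π (i + 1)
            = 2 * (n : ℤ) - 3 := by
          intro n hn
          induction n, hn using Nat.le_induction with
          | base =>
            rw [Finset.sum_range_succ, Finset.sum_range_one]
            have e1 : ELp memGame π 1 = 1 := by
              rw [show (1:ℕ) = 0 + 1 from rfl, ELp_succ]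
              rw [h0, h1]
              simp [ELp, memGame_w]
            have e2 : ELp memGame π 2 = 0 := by
              rw [show (2:ℕ) = 1 + 1 from rfl, ELp_succ, e1, h1, h2]
              simp [memGame_w]
            rw [e1, e2]
            norm_num
          | succ n hn ih =>
            rw [Finset.sum_range_succ, ih, hEL (n+1) (by omega)]
            push_cast
            ring
        simp only [AvgEnergyLevel] at hAE
        have hlow : (((3:ℝ)/2 : ℝ) : EReal) ≤ AEsupP memGame π := by
          rw [AEsupP]
          apply le_limsup_coe
          rw [eventually_atTop]
          refine ⟨6, fun n hn => ?_⟩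
          have key : (∑ i ∈ Finset.range n, (ELp memGame π (i + 1) : ℝ))
              = ((2 * (n : ℤ) - 3 : ℤ) : ℝ) := by
            have h := hsum n (by omega)
            exact_mod_cast congrArg (fun z : ℤ => (z : ℝ)) h
          rw [key]
          have hn' : (6 : ℝ) ≤ (n : ℝ) := by exact_mod_cast hn
          rw [le_div_iff₀ (by linarith)]
          push_cast
          linarith
        have := EReal.coe_le_coe_iff.mp (hlow.trans hAE)
        norm_num at this
      · -- player 1 moves to s₃ again; energy drops below 0
        have : ELp memGame π 3 = -1 := by
          show ELp memGame π (2 + 1) = -1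
          rw [ELp_succ, ELp_succ, ELp_succ]
          rw [h0, h1, h2, h3]
          simp [ELp, memGame_w]
        have hL3 := hL 3
        rw [this] at hL3
        norm_num at hL3

end
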